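/- Let γ ∈ ℝ², b a positive integer, a ∈ ℤ² with |γ − a/b| = ‖bγ‖/b, and let q > r be positive integers with g = gcd(q,r), q' = q/g, r' = r/g, h = q' − r'. Suppose u, v ∈ ℤ² satisfy the shift-reduced coprimality conditions gcd(bu + a, bq) = 1 and gcd(bv + a, br) = 1 (componentwise gcd of the vector's entries with the modulus). If |q'(v + γ) − r'(u + γ)| < D for some D > 0, then 1 ≤ D·b + h·‖bγ‖. -/

import Mathlib

/-- Maximum-norm distance from a point of `ℝ × ℝ` to the nearest integer vector. -/
noncomputable def nint2 (x : ℝ × ℝ) : ℝ := max |x.1 - round x.1| |x.2 - round x.2|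

theorem shift_reduced_lower_bound (γ : ℝ × ℝ) (b : ℕ) (hb : 0 < b) (a : ℤ × ℤ)
    (ha : max |γ.1 - (a.1 : ℝ) / b| |γ.2 - (a.2 : ℝ) / b|
      = nint2 ((b : ℝ) * γ.1, (b : ℝ) * γ.2) / b)
    (q r : ℕ) (hr : 0 < r) (hrq : r < q)
    (q' r' h : ℕ) (hq' : q' = q / Nat.gcd q r) (hr' : r' = r / Nat.gcd q r)
    (hh : h = q' - r')
    (u v : ℤ × ℤ)
    (hu : Int.gcd (Int.gcd ((b : ℤ) * u.1 + a.1) ((b : ℤ) * u.2 + a.2) : ℤ) ((b : ℤ) * q) = 1)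
    (hv : Int.gcd (Int.gcd ((b : ℤ) * v.1 + a.1) ((b : ℤ) * v.2 + a.2) : ℤ) ((b : ℤ) * r) = 1)
    (D : ℝ) (hD : 0 < D)
    (hclose : max |(q' : ℝ) * ((v.1 : ℝ) + γ.1) - (r' : ℝ) * ((u.1 : ℝ) + γ.1)|
                  |(q' : ℝ) * ((v.2 : ℝ) + γ.2) - (r' : ℝ) * ((u.2 : ℝ) + γ.2)| < D) :
    1 ≤ D * b + (h : ℝ) * nint2 ((b : ℝ) * γ.1, (b : ℝ) * γ.2) := by
  set N : ℝ := nint2 ((b : ℝ) * γ.1, (b : ℝ) * γ.2) with hN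
  have hN0 : 0 ≤ N := le_trans (abs_nonneg _) (le_max_left _ _)
  set g := Nat.gcd q r with hg
  have hg0 : 0 < g := Nat.gcd_pos_of_pos_right q hr
  have hq'g : q' * g = q := by rw [hq', hg]; exact Nat.div_mul_cancel (Nat.gcd_dvd_left q r)
  have hr'g : r' * g = r := by rw [hr', hg]; exact Nat.div_mul_cancel (Nat.gcd_dvd_right q r)
  have hr'1 : 1 ≤ r' := by
    rw [hr']
    exact (Nat.one_le_div_iff hg0).mpr (Nat.le_of_dvd hr (Nat.gcd_dvd_right q r))
  have hlt : r' < q' := by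
    have : r' * g < q' * g := by omega
    exact Nat.lt_of_mul_lt_mul_right this
  have hcop : Nat.Coprime q' r' := by
    rw [hq', hr']; exact Nat.coprime_div_gcd_div_gcd hg0
  have hhq : r' + h = q' := by omega
  -- real versions
  have hbR : (0:ℝ) < b := by exact_mod_cast hb
  have hhR : (h : ℝ) = (q' : ℝ) - (r' : ℝ) := by
    have h2 : ((r' + h : ℕ) : ℝ) = (q' : ℝ) := by exact_mod_cast congrArg (Nat.cast : ℕ → ℝ) hhq
    push_cast at h2; linarith
  -- the key integer vector is nonzero
  have hW : ((q' : ℤ) * ((b : ℤ) * v.1 + a.1) - (r' : ℤ) * ((b : ℤ) * u.1 + a.1) ≠ 0) ∨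
      ((q' : ℤ) * ((b : ℤ) * v.2 + a.2) - (r' : ℤ) * ((b : ℤ) * u.2 + a.2) ≠ 0) := by
    by_contra hc
    push_neg at hc
    obtain ⟨h1, h2⟩ := hc
    have hcopZ : IsCoprime (q' : ℤ) (r' : ℤ) := Int.isCoprime_iff_gcd_eq_one.mpr (by
      simpa [Int.gcd_natCast_natCast] using hcop)
    have d1 : (q' : ℤ) ∣ (b : ℤ) * u.1 + a.1 := by
      have : (q' : ℤ) ∣ (r' : ℤ) * ((b : ℤ) * u.1 + a.1) := ⟨(b : ℤ) * v.1 + a.1, by linarith⟩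
      exact hcopZ.dvd_of_dvd_mul_left this
    have d2 : (q' : ℤ) ∣ (b : ℤ) * u.2 + a.2 := by
      have : (q' : ℤ) ∣ (r' : ℤ) * ((b : ℤ) * u.2 + a.2) := ⟨(b : ℤ) * v.2 + a.2, by linarith⟩
      exact hcopZ.dvd_of_dvd_mul_left this
    have dg : (q' : ℤ) ∣ (Int.gcd ((b : ℤ) * u.1 + a.1) ((b : ℤ) * u.2 + a.2) : ℤ) :=
      Int.dvd_coe_gcd d1 d2
    have dq : (q' : ℤ) ∣ (b : ℤ) * q := by
      exact Dvd.dvd.mul_left (Int.natCast_dvd_natCast.mpr ⟨g, hq'g.symm⟩) _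
    have : (q' : ℤ) ∣ (Int.gcd
        (Int.gcd ((b : ℤ) * u.1 + a.1) ((b : ℤ) * u.2 + a.2) : ℤ) ((b : ℤ) * q) : ℤ) :=
      Int.dvd_coe_gcd dg dq
    rw [hu] at this
    have : q' ∣ 1 := by exact_mod_cast this
    have : q' = 1 := Nat.dvd_one.mp this
    omega
  -- bounds on the distance from γ to a/b
  have ha1 : |γ.1 - (a.1 : ℝ) / b| ≤ N / b := ha ▸ le_max_left _ _
  have ha2 : |γ.2 - (a.2 : ℝ) / b| ≤ N / b := ha ▸ le_max_right _ _
  have hc1 : |(q' : ℝ) * ((v.1 : ℝ) + γ.1) - (r' : ℝ) * ((u.1 : ℝ) + γ.1)| < D :=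
    lt_of_le_of_lt (le_max_left _ _) hclose
  have hc2 : |(q' : ℝ) * ((v.2 : ℝ) + γ.2) - (r' : ℝ) * ((u.2 : ℝ) + γ.2)| < D :=
    lt_of_le_of_lt (le_max_right _ _) hclose
  -- generic one-coordinate argument
  have key : ∀ (ui vi ai : ℤ) (gi : ℝ),
      |gi - (ai : ℝ) / b| ≤ N / b →
      |(q' : ℝ) * ((vi : ℝ) + gi) - (r' : ℝ) * ((ui : ℝ) + gi)| < D →
      ((q' : ℤ) * ((b : ℤ) * vi + ai) - (r' : ℤ) * ((b : ℤ) * ui + ai) ≠ 0) →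
      1 ≤ D * b + (h : ℝ) * N := by
    intro ui vi ai gi hdist hcl hne
    set W : ℤ := (q' : ℤ) * ((b : ℤ) * vi + ai) - (r' : ℤ) * ((b : ℤ) * ui + ai) with hWdef
    have h1W : (1 : ℝ) ≤ |(W : ℝ)| := by
      have : (1 : ℤ) ≤ |W| := Int.one_le_abs hne
      rw [← Int.cast_abs]; exact_mod_cast this
    have hWeq : (W : ℝ) = (b : ℝ) * ((q' : ℝ) * ((vi : ℝ) + gi) - (r' : ℝ) * ((ui : ℝ) + gi))
        - (h : ℝ) * ((b : ℝ) * gi - (ai : ℝ)) := by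
      rw [hWdef, hhR]; push_cast; ring
    have hba : |(b : ℝ) * gi - (ai : ℝ)| ≤ N := by
      have : (b : ℝ) * gi - (ai : ℝ) = (b : ℝ) * (gi - (ai : ℝ) / b) := by
        field_simp
      rw [this, abs_mul, abs_of_pos hbR]
      calc (b : ℝ) * |gi - (ai:ℝ)/b| ≤ (b : ℝ) * (N / b) := by
            exact mul_le_mul_of_nonneg_left hdist (le_of_lt hbR)
        _ = N := by field_simp
    have : |(W : ℝ)| ≤ (b : ℝ) * D + (h : ℝ) * N := by
      rw [hWeq]
      calc |(b : ℝ) * ((q' : ℝ) * ((vi : ℝ) + gi) - (r' : ℝ) * ((ui : ℝ) + gi))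
            - (h : ℝ) * ((b : ℝ) * gi - (ai : ℝ))|
          ≤ |(b : ℝ) * ((q' : ℝ) * ((vi : ℝ) + gi) - (r' : ℝ) * ((ui : ℝ) + gi))|
            + |(h : ℝ) * ((b : ℝ) * gi - (ai : ℝ))| := abs_sub _ _
        _ = (b : ℝ) * |(q' : ℝ) * ((vi : ℝ) + gi) - (r' : ℝ) * ((ui : ℝ) + gi)|
            + (h : ℝ) * |(b : ℝ) * gi - (ai : ℝ)| := by
              rw [abs_mul, abs_mul, abs_of_pos hbR, abs_of_nonneg (by positivity : (0:ℝ) ≤ (h:ℝ))]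
        _ ≤ (b : ℝ) * D + (h : ℝ) * N := by
              gcongr <;> exact le_of_lt hcl
    have : (1 : ℝ) ≤ (b : ℝ) * D + (h : ℝ) * N := le_trans h1W this
    linarith
  rcases hW with hW | hW
  · exact key u.1 v.1 a.1 γ.1 ha1 hc1 hW
  · exact key u.2 v.2 a.2 γ.2 ha2 hc2 hW
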